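/- Let g : ℝᵐ → ℝ ∪ {∞} be a polyhedral function and (z̄, λ̄) ∈ gph ∂g. Then the regular (Fréchet) normal cone to gph ∂g at (z̄, λ̄) equals K* × K, where K = K_g(z̄, λ̄) is the critical cone and K* its polar. -/

import Mathlib

open Filter Topology Set Metric

noncomputable section

/-- A polyhedral convex set: a finite intersection of closed half-spaces. -/
def IsPolyhedralSet {E : Type*} [AddCommGroup E] [Module ℝ E] (C : Set E) : Prop :=
  ∃ (s : ℕ) (b : Fin s → (E →ₗ[ℝ] ℝ)) (β : Fin s → ℝ), C = {x | ∀ i, b i x ≤ β i}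

/-- A polyhedral function: proper (never `⊥`, somewhere finite) with polyhedral epigraph. -/
def IsPolyhedralFn {E : Type*} [AddCommGroup E] [Module ℝ E] (g : E → EReal) : Prop :=
  (∃ z, g z ≠ ⊤) ∧ (∀ z, g z ≠ ⊥) ∧
    IsPolyhedralSet {p : E × ℝ | g p.1 ≤ (p.2 : EReal)}

/-- Tangent cone to a convex set: closure of the cone of feasible directions. -/
def tcone {E : Type*} [NormedAddCommGroup E] [NormedSpace ℝ E] (C : Set E) (x : E) : Set E :=
  closure {w | ∃ t : ℝ, 0 < t ∧ x + t • w ∈ C}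

/-- Convex subdifferential of an extended-real-valued function. -/
def subdiff {E : Type*} [NormedAddCommGroup E] [InnerProductSpace ℝ E]
    (g : E → EReal) (z : E) : Set E :=
  {v | ∀ x, g z + ((inner ℝ v (x - z) : ℝ) : EReal) ≤ g x}

/-- Subderivative: `dg(z)(w) = liminf_{t↓0, w'→w} (g(z+tw')-g(z))/t`. -/
def subderiv {E : Type*} [NormedAddCommGroup E] [NormedSpace ℝ E]
    (g : E → EReal) (z : E) (w : E) : EReal :=
  Filter.liminf (fun p : ℝ × E => (g (z + p.1 • p.2) - g z) * (((p.1)⁻¹ : ℝ) : EReal))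
    ((nhdsWithin 0 (Set.Ioi (0 : ℝ))) ×ˢ 𝓝 w)

/-- Critical cone `K_g(z,v) = {w | dg(z)(w) = ⟨v,w⟩}`. -/
def Kcone {E : Type*} [NormedAddCommGroup E] [InnerProductSpace ℝ E]
    (g : E → EReal) (z v : E) : Set E :=
  {w | subderiv g z w = ((inner ℝ v w : ℝ) : EReal)}

/-- Normal cone of convex analysis. -/
def ncone {E : Type*} [NormedAddCommGroup E] [InnerProductSpace ℝ E]
    (C : Set E) (x : E) : Set E :=
  {v | ∀ y ∈ C, (inner ℝ v (y - x) : ℝ) ≤ 0}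

/-- A set is a linear subspace. -/
def IsLinSubspace {E : Type*} [AddCommGroup E] [Module ℝ E] (K : Set E) : Prop :=
  ∃ S : Submodule ℝ E, K = ↑S

/-- Polar cone. -/
def polarCone {E : Type*} [NormedAddCommGroup E] [InnerProductSpace ℝ E] (K : Set E) : Set E :=
  {u | ∀ w ∈ K, (inner ℝ u w : ℝ) ≤ 0}

/-- Fenchel conjugate. -/
def fconj {E : Type*} [NormedAddCommGroup E] [InnerProductSpace ℝ E]
    (g : E → EReal) (v : E) : EReal :=
  ⨆ z, ((inner ℝ v z : ℝ) : EReal) - g z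

/-- Bouligand (contingent) tangent cone, via sequences. -/
def btcone {E : Type*} [NormedAddCommGroup E] [NormedSpace ℝ E] (Ω : Set E) (x : E) : Set E :=
  {w | ∃ (t : ℕ → ℝ) (v : ℕ → E), (∀ n, 0 < t n) ∧ Tendsto t atTop (𝓝 0) ∧
      Tendsto v atTop (𝓝 w) ∧ ∀ n, x + t n • v n ∈ Ω}

/-- Clarke (regular) tangent cone, via sequences. -/
def clarkeT {E : Type*} [NormedAddCommGroup E] [NormedSpace ℝ E] (Ω : Set E) (xb : E) : Set E :=
  {w | ∀ (x : ℕ → E) (t : ℕ → ℝ), (∀ n, x n ∈ Ω) → Tendsto x atTop (𝓝 xb) →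
      (∀ n, 0 < t n) → Tendsto t atTop (𝓝 0) →
      ∃ v : ℕ → E, Tendsto v atTop (𝓝 w) ∧ ∀ n, x n + t n • v n ∈ Ω}

/-- Paratingent cone, via sequences. -/
def paraT {E : Type*} [NormedAddCommGroup E] [NormedSpace ℝ E] (Ω : Set E) (xb : E) : Set E :=
  {w | ∃ (x : ℕ → E) (t : ℕ → ℝ) (v : ℕ → E), (∀ n, x n ∈ Ω) ∧ Tendsto x atTop (𝓝 xb) ∧
      (∀ n, 0 < t n) ∧ Tendsto t atTop (𝓝 0) ∧ Tendsto v atTop (𝓝 w) ∧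
      ∀ n, x n + t n • v n ∈ Ω}


theorem farkas {E : Type*} [AddCommGroup E] [Module ℝ E] :
    ∀ (n : ℕ) (L : Fin n → E →ₗ[ℝ] ℝ) (u : E →ₗ[ℝ] ℝ),
      (∀ w, (∀ i, L i w ≤ 0) → u w ≤ 0) →
      ∃ μ : Fin n → ℝ, (∀ i, 0 ≤ μ i) ∧ ∀ w, u w = ∑ i, μ i * L i w := by
  intro n
  induction n with
  | zero =>
    intro L u hu
    refine ⟨fun i => 0, fun i => le_refl _, fun w => ?_⟩
    have h1 : u w ≤ 0 := hu w (fun i => i.elim0)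
    have h2 : u (-w) ≤ 0 := hu (-w) (fun i => i.elim0)
    rw [map_neg] at h2
    simp only [Finset.univ_eq_empty, Finset.sum_empty]
    linarith
  | succ n ih =>
    intro L u hu
    by_cases hc : ∀ w, (∀ i : Fin n, L i.castSucc w ≤ 0) → u w ≤ 0
    · obtain ⟨μ, hμ, heq⟩ := ih (fun i => L i.castSucc) u hc
      refine ⟨Fin.snoc μ 0, ?_, fun w => ?_⟩
      · intro i
        refine Fin.lastCases ?_ ?_ i
        · simp
        · intro j; simp [Fin.snoc_castSucc]; exact hμ j
      · rw [Fin.sum_univ_castSucc]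
        simp only [Fin.snoc_castSucc, Fin.snoc_last, zero_mul, add_zero]
        exact heq w
    · push_neg at hc
      obtain ⟨w₀, hw₀, hupos⟩ := hc
      -- necessarily L (last) w₀ > 0
      have hln : 0 < L (Fin.last n) w₀ := by
        by_contra h
        push_neg at h
        have : ∀ i : Fin (n+1), L i w₀ ≤ 0 := by
          intro i
          refine Fin.lastCases ?_ ?_ i
          · exact h
          · exact hw₀
        exact absurd (hu w₀ this) (not_le.mpr hupos)
      set c := L (Fin.last n) w₀ with hc_def
      set Ln := L (Fin.last n) with hLn
      -- reduced system
      set L' : Fin n → E →ₗ[ℝ] ℝ := fun i => c • L i.castSucc - (L i.castSucc w₀) • Ln with hL'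
      set u' : E →ₗ[ℝ] ℝ := c • u - (u w₀) • Ln with hu'
      have hred : ∀ w, (∀ i : Fin n, L' i w ≤ 0) → u' w ≤ 0 := by
        intro w hw
        set w' := c • w - (Ln w) • w₀ with hw'
        have hall : ∀ i : Fin (n+1), L i w' ≤ 0 := by
          intro i
          refine Fin.lastCases ?_ ?_ i
          · simp only [hw', map_sub, map_smul, smul_eq_mul, ← hLn]
            rw [← hc_def]
            ring_nf
            try exact le_refl _
          · intro j
            have := hw j
            simp only [hL', LinearMap.sub_apply, LinearMap.smul_apply, smul_eq_mul] at this
            simp only [hw', map_sub, map_smul, smul_eq_mul]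
            linarith [this]
        have := hu w' hall
        simp only [hw', map_sub, map_smul, smul_eq_mul] at this
        simp only [hu', LinearMap.sub_apply, LinearMap.smul_apply, smul_eq_mul]
        linarith
      obtain ⟨μ, hμ, heq⟩ := ih L' u' hred
      set ν : ℝ := (u w₀ - ∑ i, μ i * L i.castSucc w₀) / c with hν
      refine ⟨Fin.snoc μ ν, ?_, fun w => ?_⟩
      · intro i
        refine Fin.lastCases ?_ ?_ i
        · simp only [Fin.snoc_last]
          apply div_nonneg _ (le_of_lt hln)
          have : ∀ i, μ i * L i.castSucc w₀ ≤ 0 := fun i =>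
            mul_nonpos_of_nonneg_of_nonpos (hμ i) (hw₀ i)
          have hsum : ∑ i, μ i * L i.castSucc w₀ ≤ 0 := Finset.sum_nonpos (fun i _ => this i)
          linarith
        · intro j; simpa using hμ j
      · have key := heq w
        simp only [hu', hL', LinearMap.sub_apply, LinearMap.smul_apply, smul_eq_mul] at key
        -- key : c * u w - u w₀ * Ln w = ∑ i, μ i * (c * L i.castSucc w - L i.castSucc w₀ * Ln w)
        rw [Fin.sum_univ_castSucc]
        simp only [Fin.snoc_castSucc, Fin.snoc_last]
        have hexp : ∑ i, μ i * (c * L i.castSucc w - L i.castSucc w₀ * Ln w)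
            = c * (∑ i, μ i * L i.castSucc w) - (∑ i, μ i * L i.castSucc w₀) * Ln w := by
          rw [Finset.mul_sum, Finset.sum_mul, ← Finset.sum_sub_distrib]
          apply Finset.sum_congr rfl
          intro i _
          ring
        rw [hexp] at key
        have hc0 : c ≠ 0 := ne_of_gt hln
        rw [hν]
        field_simp
        nlinarith [key]

section Setup

variable {E : Type*} [NormedAddCommGroup E] [InnerProductSpace ℝ E]
variable {g : E → EReal} {s : ℕ} {b : Fin s → (E × ℝ →ₗ[ℝ] ℝ)} {β : Fin s → ℝ}
variable {zb lb : E} {γ : ℝ}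

/-- linear part in `x` -/
def pA (b : Fin s → (E × ℝ →ₗ[ℝ] ℝ)) (i : Fin s) : E →ₗ[ℝ] ℝ :=
  (b i).comp (LinearMap.inl ℝ E ℝ)

/-- coefficient of `r` -/
def pa (b : Fin s → (E × ℝ →ₗ[ℝ] ℝ)) (i : Fin s) : ℝ := b i (0, 1)

lemma hba (i : Fin s) (x : E) (r : ℝ) : b i (x, r) = pA b i x + r * pa b i := by
  have : (x, r) = (x, (0:ℝ)) + r • ((0:E), (1:ℝ)) := by
    simp [Prod.ext_iff]
  rw [this, map_add, map_smul]
  simp only [pA, pa, smul_eq_mul, LinearMap.coe_comp, Function.comp_apply, LinearMap.inl_apply]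

variable (hepi : {p : E × ℝ | g p.1 ≤ (p.2 : EReal)} = {p | ∀ i, b i p ≤ β i})
variable (hbot : ∀ z, g z ≠ ⊥) (hγ : g zb = (γ : EReal))
variable (hl : lb ∈ subdiff g zb)

section
include hepi

lemma mem_epi (x : E) (r : ℝ) : g x ≤ (r : EReal) ↔ ∀ i, b i (x, r) ≤ β i := by
  have := Set.ext_iff.mp hepi (x, r)
  simpa using this

include hγ

lemma hd_nonneg (i : Fin s) : 0 ≤ β i - (pA b i zb + γ * pa b i) := by
  have h := (mem_epi hepi zb γ).mp (le_of_eq hγ) i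
  rw [hba] at h
  linarith

lemma ha_nonpos (i : Fin s) : pa b i ≤ 0 := by
  by_contra h
  push_neg at h
  set k : ℝ := (β i - pA b i zb - γ * pa b i) / pa b i + 1 with hk
  have hk0 : 0 ≤ k ∨ True := Or.inr trivial
  -- g zb ≤ γ + max k 0
  have hle : g zb ≤ ((γ + max k 0 : ℝ) : EReal) := by
    rw [hγ]
    rw [EReal.coe_le_coe_iff]
    have := le_max_right k 0
    linarith
  have h2 := (mem_epi hepi zb (γ + max k 0)).mp hle i
  rw [hba] at h2
  have hkk : max k 0 ≥ k := le_max_left k 0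
  have : pA b i zb + (γ + max k 0) * pa b i ≥ pA b i zb + (γ + k) * pa b i := by
    have := mul_le_mul_of_nonneg_right hkk (le_of_lt h)
    nlinarith
  have hkey : pA b i zb + (γ + k) * pa b i > β i := by
    rw [hk]
    field_simp
    nlinarith [h]
  linarith

/-- The key constraint characterization. -/
lemma constraint_iff {t : ℝ} (ht : 0 < t) (w : E) (μ : ℝ) :
    g (zb + t • w) ≤ ((γ + t * μ : ℝ) : EReal) ↔
      ∀ i, t * (pA b i w + μ * pa b i) ≤ β i - (pA b i zb + γ * pa b i) := by
  rw [mem_epi hepi]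
  apply forall_congr'
  intro i
  rw [hba]
  have : pA b i (zb + t • w) = pA b i zb + t * pA b i w := by
    rw [map_add, map_smul]; rfl
  rw [this]
  constructor <;> intro h <;> nlinarith

end

section
include hbot

lemma ereal_real_cases (x : E) (h : g x ≠ ⊤) : ∃ ρ : ℝ, g x = (ρ : EReal) :=
  ⟨(g x).toReal, (EReal.coe_toReal h (hbot x)).symm⟩

/-- quotient ≤ μ iff the epigraph-style bound -/
lemma q_le_iff {t : ℝ} (ht : 0 < t) (x : E) (μ : ℝ) :
    (g x - (γ : EReal)) * ((t⁻¹ : ℝ) : EReal) ≤ (μ : EReal) ↔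
      g x ≤ ((γ + t * μ : ℝ) : EReal) := by
  by_cases htop : g x = ⊤
  · rw [htop]
    simp only [EReal.top_sub_coe]
    rw [EReal.top_mul_of_pos (by exact_mod_cast inv_pos.mpr ht)]
    constructor <;> intro h <;> exact absurd (top_le_iff.mp h) (EReal.coe_ne_top _)
  · obtain ⟨ρ, hρ⟩ := ereal_real_cases hbot x htop
    rw [hρ, ← EReal.coe_sub, ← EReal.coe_mul, EReal.coe_le_coe_iff, EReal.coe_le_coe_iff]
    have hrw : (ρ - γ) * t⁻¹ = (ρ - γ) / t := by ring
    rw [hrw, div_le_iff₀ ht]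
    constructor <;> intro h <;> nlinarith

lemma le_q_iff {t : ℝ} (ht : 0 < t) (x : E) (μ : ℝ) :
    (μ : EReal) ≤ (g x - (γ : EReal)) * ((t⁻¹ : ℝ) : EReal) ↔
      ((γ + t * μ : ℝ) : EReal) ≤ g x := by
  by_cases htop : g x = ⊤
  · rw [htop]
    simp only [EReal.top_sub_coe]
    rw [EReal.top_mul_of_pos (by exact_mod_cast inv_pos.mpr ht)]
    simp
  · obtain ⟨ρ, hρ⟩ := ereal_real_cases hbot x htop
    rw [hρ, ← EReal.coe_sub, ← EReal.coe_mul, EReal.coe_le_coe_iff, EReal.coe_le_coe_iff]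
    have hrw : (ρ - γ) * t⁻¹ = (ρ - γ) / t := by ring
    rw [hrw, le_div_iff₀ ht]
    constructor <;> intro h <;> nlinarith

end

/-- the explicit critical cone -/
def Kzero (b : Fin s → (E × ℝ →ₗ[ℝ] ℝ)) (β : Fin s → ℝ) (zb lb : E) (γ : ℝ) : Set E :=
  {w | ∀ i, β i - (pA b i zb + γ * pa b i) = 0 →
      pA b i w + (inner ℝ lb w : ℝ) * pa b i ≤ 0}

include hl hγ in
lemma lower_q {t : ℝ} (ht : 0 < t) (w' : E) :
    ((γ + t * (inner ℝ lb w' : ℝ) : ℝ) : EReal) ≤ g (zb + t • w') := by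
  have h := hl (zb + t • w')
  rw [hγ] at h
  have harg : zb + t • w' - zb = t • w' := by abel
  rw [harg, real_inner_smul_right, ← EReal.coe_add] at h
  exact h

include hl hγ hbot in
lemma subderiv_ge (w : E) : ((inner ℝ lb w : ℝ) : EReal) ≤ subderiv g zb w := by
  have hcont : Tendsto (fun p : ℝ × E => (((inner ℝ lb p.2 : ℝ)) : EReal))
      ((𝓝[>] (0:ℝ)) ×ˢ 𝓝 w) (𝓝 (((inner ℝ lb w : ℝ)) : EReal)) :=
    (continuous_coe_real_ereal.tendsto _).comp (Tendsto.inner tendsto_const_nhds tendsto_snd)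
  have hlim := hcont.liminf_eq
  rw [subderiv, ← hlim]
  refine Filter.liminf_le_liminf ?_ (by isBoundedDefault) (by isBoundedDefault)
  have h1 : ∀ᶠ p : ℝ × E in (𝓝[>] (0:ℝ)) ×ˢ 𝓝 w, p.1 ∈ Ioi (0:ℝ) :=
    tendsto_fst.eventually eventually_mem_nhdsWithin
  filter_upwards [h1] with p hp
  rw [hγ]
  exact (le_q_iff hbot hp _ _).mpr (lower_q hγ hl hp p.2)

include hepi hγ in
lemma feas_ev {w : E} (hw : w ∈ Kzero b β zb lb γ) :
    ∀ᶠ t in 𝓝[>] (0:ℝ), ∀ i,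
      t * (pA b i w + (inner ℝ lb w : ℝ) * pa b i) ≤ β i - (pA b i zb + γ * pa b i) := by
  rw [eventually_all]
  intro i
  by_cases he : pA b i w + (inner ℝ lb w : ℝ) * pa b i ≤ 0
  · filter_upwards [eventually_mem_nhdsWithin] with t ht
    have := mul_nonpos_of_nonneg_of_nonpos (le_of_lt ht) he
    linarith [hd_nonneg hepi hγ i]
  · push_neg at he
    have hdpos : 0 < β i - (pA b i zb + γ * pa b i) := by
      rcases lt_or_eq_of_le (hd_nonneg hepi hγ i) with h | h
      · exact h
      · exact absurd (hw i h.symm) (not_le.mpr he)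
    have hmem : Ioo (0:ℝ) ((β i - (pA b i zb + γ * pa b i)) /
        (pA b i w + (inner ℝ lb w : ℝ) * pa b i)) ∈ 𝓝[>] (0:ℝ) :=
      Ioo_mem_nhdsGT_of_mem ⟨le_refl _, div_pos hdpos he⟩
    filter_upwards [hmem] with t ht
    obtain ⟨ht0, htl⟩ := ht
    have := (lt_div_iff₀ he).mp htl
    linarith

include hepi hγ hbot in
lemma subderiv_le_of_mem {w : E} (hw : w ∈ Kzero b β zb lb γ) :
    subderiv g zb w ≤ ((inner ℝ lb w : ℝ) : EReal) := by
  have hev : ∀ᶠ t in 𝓝[>] (0:ℝ),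
      (g (zb + t • w) - g zb) * ((t⁻¹:ℝ):EReal) ≤ (((inner ℝ lb w : ℝ)) : EReal) := by
    filter_upwards [feas_ev hepi hγ hw, eventually_mem_nhdsWithin] with t h1 ht
    rw [hγ]
    exact (q_le_iff hbot ht _ _).mpr ((constraint_iff hepi hγ ht w _).mpr h1)
  have hmap : Tendsto (fun t : ℝ => (t, w)) (𝓝[>] (0:ℝ)) ((𝓝[>] (0:ℝ)) ×ˢ 𝓝 w) :=
    tendsto_id.prodMk tendsto_const_nhds
  have hfreq : ∃ᶠ p : ℝ × E in (𝓝[>] (0:ℝ)) ×ˢ 𝓝 w,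
      (g (zb + p.1 • p.2) - g zb) * (((p.1)⁻¹:ℝ):EReal) ≤ (((inner ℝ lb w : ℝ)) : EReal) := by
    have h2 : ∃ᶠ t in 𝓝[>] (0:ℝ),
        (g (zb + t • w) - g zb) * ((t⁻¹:ℝ):EReal) ≤ (((inner ℝ lb w : ℝ)) : EReal) :=
      hev.frequently
    exact (Filter.frequently_map.mpr h2).filter_mono hmap
  exact Filter.liminf_le_of_frequently_le' hfreq

include hepi hγ hbot hl in
lemma Kcone_eq [FiniteDimensional ℝ E] : Kcone g zb lb = Kzero b β zb lb γ := by
  ext w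
  constructor
  · intro hw
    by_contra hnot
    rw [Kzero, mem_setOf_eq] at hnot
    push_neg at hnot
    obtain ⟨i, hact, hviol⟩ := hnot
    have hwcrit : subderiv g zb w = ((inner ℝ lb w : ℝ) : EReal) := hw
    have hpaneg : pa b i ≤ 0 := ha_nonpos hepi hγ i
    rcases eq_or_lt_of_le hpaneg with hpa0 | hpaneg'
    · -- pa = 0 case : subderiv is ⊤ near w
      have hApos : 0 < pA b i w := by rw [hpa0, mul_zero, add_zero] at hviol; exact hviol
      have hcontA : Continuous (pA b i) := (pA b i).continuous_of_finiteDimensional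
      have hevA : ∀ᶠ w' in 𝓝 w, 0 < pA b i w' :=
        (hcontA.tendsto w).eventually (lt_mem_nhds hApos)
      have hev : ∀ᶠ p : ℝ × E in (𝓝[>] (0:ℝ)) ×ˢ 𝓝 w,
          (⊤:EReal) ≤ (g (zb + p.1 • p.2) - g zb) * (((p.1)⁻¹:ℝ):EReal) := by
        filter_upwards [tendsto_fst.eventually (eventually_mem_nhdsWithin (s := Ioi (0:ℝ))),
          tendsto_snd.eventually hevA] with p hp1 hp2
        rw [hγ]
        by_contra htop
        rw [not_le] at htop
        obtain ⟨μ, hμ1, hμ2⟩ := EReal.exists_between_coe_real htop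
        have hle : (g (zb + p.1 • p.2) - (γ:EReal)) * (((p.1)⁻¹:ℝ):EReal) ≤ (μ:EReal) :=
          le_of_lt hμ1
        have := (constraint_iff hepi hγ hp1 p.2 μ).mp ((q_le_iff hbot hp1 _ μ).mp hle) i
        rw [hact, hpa0] at this
        nlinarith [mul_pos hp1 hp2]
      have h1 : (⊤:EReal) ≤ subderiv g zb w := by
        have := Filter.liminf_le_liminf hev (by isBoundedDefault) (by isBoundedDefault)
        rwa [Filter.liminf_const (⊤:EReal)] at this
      rw [hwcrit] at h1
      exact EReal.coe_ne_top _ (top_le_iff.mp h1)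
    · -- pa < 0 case
      set c : ℝ := pA b i w / (-pa b i) with hc_def
      have hnegpos : 0 < -pa b i := by linarith
      have hc : (inner ℝ lb w : ℝ) < c := by
        rw [hc_def, lt_div_iff₀ hnegpos]
        nlinarith [hviol]
        
      have hpoint : ∀ p : ℝ × E, p.1 ∈ Ioi (0:ℝ) →
          ((pA b i p.2 / (-pa b i) : ℝ) : EReal) ≤
            (g (zb + p.1 • p.2) - (γ:EReal)) * (((p.1)⁻¹:ℝ):EReal) := by
        intro p hp1
        by_contra hlt
        rw [not_le] at hlt
        obtain ⟨μ, hμ1, hμ2⟩ := EReal.exists_between_coe_real hlt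
        have := (constraint_iff hepi hγ hp1 p.2 μ).mp
          ((q_le_iff hbot hp1 _ μ).mp (le_of_lt hμ1)) i
        rw [hact] at this
        have h2 : pA b i p.2 + μ * pa b i ≤ 0 := by
          by_contra h3
          rw [not_le] at h3
          nlinarith [mul_pos hp1 h3]
        have h4 : pA b i p.2 / (-pa b i) ≤ μ := by
          rw [div_le_iff₀ hnegpos]
          nlinarith
        rw [EReal.coe_lt_coe_iff] at hμ2
        linarith
      have hcontA : Continuous (pA b i) := (pA b i).continuous_of_finiteDimensional
      have hcont : Tendsto (fun p : ℝ × E => ((pA b i p.2 / (-pa b i) : ℝ) : EReal))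
          ((𝓝[>] (0:ℝ)) ×ˢ 𝓝 w) (𝓝 ((c : ℝ) : EReal)) := by
        apply (continuous_coe_real_ereal.tendsto _).comp
        exact Tendsto.div_const ((hcontA.tendsto w).comp tendsto_snd) _
      have h1 : ((c:ℝ):EReal) ≤ subderiv g zb w := by
        rw [← hcont.liminf_eq, subderiv]
        refine Filter.liminf_le_liminf ?_ (by isBoundedDefault) (by isBoundedDefault)
        filter_upwards [tendsto_fst.eventually (eventually_mem_nhdsWithin (s := Ioi (0:ℝ)))]
          with p hp1
        rw [hγ]
        exact hpoint p hp1
      rw [hwcrit, EReal.coe_le_coe_iff] at h1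
      linarith
  · intro hw
    exact le_antisymm (subderiv_le_of_mem hepi hbot hγ hw) (subderiv_ge hbot hγ hl w)

include hepi hγ hl in
lemma P1 {w : E} (hw : w ∈ Kzero b β zb lb γ) :
    ∃ t0 : ℝ, 0 < t0 ∧ ∀ t : ℝ, 0 < t → t ≤ t0 →
      lb ∈ subdiff g (zb + t • w) ∧
        g (zb + t • w) = ((γ + t * (inner ℝ lb w : ℝ) : ℝ) : EReal) := by
  obtain ⟨u, hu, hsub⟩ := mem_nhdsGT_iff_exists_Ioc_subset.mp (feas_ev hepi hγ hw)
  refine ⟨u, hu, fun t ht htu => ?_⟩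
  have hfeas := hsub ⟨ht, htu⟩
  have hle : g (zb + t • w) ≤ ((γ + t * (inner ℝ lb w : ℝ) : ℝ) : EReal) :=
    (constraint_iff hepi hγ ht w _).mpr hfeas
  have hge := lower_q hγ hl ht w
  have heq : g (zb + t • w) = ((γ + t * (inner ℝ lb w : ℝ) : ℝ) : EReal) :=
    le_antisymm hle hge
  refine ⟨fun x => ?_, heq⟩
  rw [heq]
  have harg : inner ℝ lb (x - (zb + t • w)) = (inner ℝ lb (x - zb) : ℝ) - t * (inner ℝ lb w : ℝ) := by
    have : x - (zb + t • w) = (x - zb) - t • w := by abel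
    rw [this, inner_sub_right, real_inner_smul_right]
  rw [harg]
  have h2 := hl x
  rw [hγ] at h2
  calc ((γ + t * (inner ℝ lb w : ℝ) : ℝ) : EReal) +
      (((inner ℝ lb (x - zb) : ℝ) - t * (inner ℝ lb w : ℝ) : ℝ) : EReal)
      = ((γ + (inner ℝ lb (x - zb) : ℝ) : ℝ) : EReal) := by
        rw [← EReal.coe_add]; norm_num
    _ ≤ g x := by
        rw [EReal.coe_add]; exact h2

omit [InnerProductSpace ℝ E] in
lemma ereal_add_le {a : EReal} {c d : ℝ} (hbot' : a ≠ ⊥) (h : a + (c:EReal) ≤ (d:EReal)) :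
    a ≤ ((d - c : ℝ) : EReal) := by
  by_cases htop : a = ⊤
  · rw [htop, EReal.top_add_coe] at h
    exact absurd (top_le_iff.mp h) (EReal.coe_ne_top _)
  · obtain ⟨ρ, hρ⟩ : ∃ ρ : ℝ, a = (ρ : EReal) := ⟨a.toReal, (EReal.coe_toReal htop hbot').symm⟩
    rw [hρ, ← EReal.coe_add, EReal.coe_le_coe_iff] at h
    rw [hρ, EReal.coe_le_coe_iff]
    linarith

include hepi hγ hbot hl in
lemma P2 {u : E} (hu : u ∈ polarCone (Kzero b β zb lb γ)) :
    ∃ t1 : ℝ, 0 < t1 ∧ ∀ t : ℝ, 0 < t → t ≤ t1 → lb + t • u ∈ subdiff g zb := by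
  classical
  set L : Fin s → E →ₗ[ℝ] ℝ := fun i =>
    if β i - (pA b i zb + γ * pa b i) = 0
    then pA b i + pa b i • (innerSL ℝ lb).toLinearMap else 0 with hL
  have hfark : ∀ w, (∀ i, L i w ≤ 0) → ((innerSL ℝ u).toLinearMap) w ≤ 0 := by
    intro w hw
    refine hu w ?_
    intro i hact
    have h1 := hw i
    rw [hL] at h1
    simp only [if_pos hact, LinearMap.add_apply, LinearMap.smul_apply, smul_eq_mul] at h1
    have h2 : (innerSL ℝ lb).toLinearMap w = (inner ℝ lb w : ℝ) := rfl
    rw [h2] at h1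
    linarith [h1]
  obtain ⟨μ, hμ0, hrep⟩ := farkas s L ((innerSL ℝ u).toLinearMap) hfark
  set M : ℝ := ∑ i, μ i * (if β i - (pA b i zb + γ * pa b i) = 0 then -pa b i else 0) with hM_def
  have hM : 0 ≤ M := by
    apply Finset.sum_nonneg
    intro i _
    apply mul_nonneg (hμ0 i)
    split
    · linarith [ha_nonpos hepi hγ i]
    · exact le_refl _
  refine ⟨(M + 1)⁻¹, by positivity, fun t ht htle => ?_⟩
  intro x
  by_cases hx : g x = ⊤
  · rw [hx]; exact le_top
  obtain ⟨ρ, hρ⟩ := ereal_real_cases hbot x hx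
  set e : ℝ := (ρ - γ) - (inner ℝ lb (x - zb) : ℝ) with he_def
  have he : 0 ≤ e := by
    have h2 := hl x
    rw [hγ, hρ, ← EReal.coe_add, EReal.coe_le_coe_iff] at h2
    rw [he_def]; linarith
  have hxr : ∀ j, b j (x, ρ) ≤ β j := (mem_epi hepi x ρ).mp (le_of_eq hρ)
  -- per-term bound
  have hterm : ∀ i, μ i * L i (x - zb) ≤
      μ i * ((if β i - (pA b i zb + γ * pa b i) = 0 then -pa b i else 0) * e) := by
    intro i
    by_cases hact : β i - (pA b i zb + γ * pa b i) = 0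
    · rw [hL]
      simp only [if_pos hact]
      apply mul_le_mul_of_nonneg_left _ (hμ0 i)
      have h3 := hxr i
      rw [hba i x ρ] at h3
      have h4 : pA b i (x - zb) = pA b i x - pA b i zb := by rw [map_sub]
      have h5 : (pA b i + pa b i • (innerSL ℝ lb).toLinearMap) (x - zb)
          = pA b i (x - zb) + pa b i * (inner ℝ lb (x - zb) : ℝ) := by
        simp only [LinearMap.add_apply, LinearMap.smul_apply, smul_eq_mul]
        rfl
      rw [h5, h4]
      have h6 : -pa b i * e = -pa b i * (ρ - γ - (inner ℝ lb (x - zb) : ℝ)) := by rw [he_def]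
      nlinarith [h3, h6]
    · rw [hL]
      simp only [if_neg hact, LinearMap.zero_apply]
      simp
  have hsum : (inner ℝ u (x - zb) : ℝ) ≤ M * e := by
    have h6 : (inner ℝ u (x - zb) : ℝ) = ∑ i, μ i * L i (x - zb) := hrep (x - zb)
    rw [h6, hM_def, Finset.sum_mul]
    apply Finset.sum_le_sum
    intro i _
    calc μ i * L i (x - zb)
        ≤ μ i * ((if β i - (pA b i zb + γ * pa b i) = 0 then -pa b i else 0) * e) := hterm i
      _ = μ i * (if β i - (pA b i zb + γ * pa b i) = 0 then -pa b i else 0) * e := by ring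
  have h5 : t * (inner ℝ u (x - zb) : ℝ) ≤ e := by
    rcases le_or_gt ((inner ℝ u (x - zb) : ℝ)) 0 with hneg | hpos
    · nlinarith
    · have h6 : t * (inner ℝ u (x-zb) : ℝ) ≤ (M+1)⁻¹ * (inner ℝ u (x-zb) : ℝ) :=
        mul_le_mul_of_nonneg_right htle hpos.le
      have h7 : (M+1)⁻¹ * (inner ℝ u (x-zb) : ℝ) ≤ (M+1)⁻¹ * (M * e) :=
        mul_le_mul_of_nonneg_left hsum (by positivity)
      have h8 : (M+1) * (M+1)⁻¹ = 1 := mul_inv_cancel₀ (by positivity)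
      nlinarith [mul_nonneg hM he]
  -- conclude
  rw [hγ, hρ]
  have h9 : (inner ℝ (lb + t • u) (x - zb) : ℝ)
      = (inner ℝ lb (x - zb) : ℝ) + t * (inner ℝ u (x - zb) : ℝ) := by
    rw [inner_add_left, real_inner_smul_left]
  rw [h9, ← EReal.coe_add, EReal.coe_le_coe_iff]
  rw [he_def] at h5
  linarith

include hbot in
lemma subdiff_mono {x₁ x₂ v₁ v₂ : E} {r₁ r₂ : ℝ} (h₁ : v₁ ∈ subdiff g x₁)
    (h₂ : v₂ ∈ subdiff g x₂) (hr₁ : g x₁ = (r₁ : EReal)) (hr₂ : g x₂ = (r₂ : EReal)) :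
    0 ≤ (inner ℝ (v₁ - v₂) (x₁ - x₂) : ℝ) := by
  have ha := h₁ x₂
  rw [hr₁, hr₂, ← EReal.coe_add, EReal.coe_le_coe_iff] at ha
  have hb := h₂ x₁
  rw [hr₂, hr₁, ← EReal.coe_add, EReal.coe_le_coe_iff] at hb
  rw [inner_sub_left]
  have hc : (inner ℝ v₁ (x₂ - x₁) : ℝ) = - (inner ℝ v₁ (x₁ - x₂) : ℝ) := by
    rw [show x₂ - x₁ = -(x₁ - x₂) by abel, inner_neg_right]
  rw [hc] at ha
  linarith


omit [InnerProductSpace ℝ E] in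
lemma seq_aux (t0 : ℝ) (ht0 : 0 < t0) :
    (∀ n : ℕ, 0 < t0 * (1/2)^n) ∧ Tendsto (fun n : ℕ => t0 * (1/2)^n) atTop (𝓝 0) ∧
      ∀ n : ℕ, t0 * (1/2)^n ≤ t0 := by
  refine ⟨fun n => by positivity, ?_, fun n => ?_⟩
  · have h := (tendsto_pow_atTop_nhds_zero_of_lt_one (by norm_num : (0:ℝ) ≤ 1/2)
      (by norm_num)).const_mul t0
    simpa using h
  · have h1 : ((1:ℝ)/2)^n ≤ 1 := pow_le_one₀ (by norm_num) (by norm_num)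
    nlinarith

include hepi hγ hl in
lemma mem_btcone_K {w : E} (hw : w ∈ Kzero b β zb lb γ) :
    ((w, 0) : E × E) ∈ btcone {p : E × E | p.2 ∈ subdiff g p.1} (zb, lb) := by
  obtain ⟨t0, ht0, hP⟩ := P1 hepi hγ hl hw
  obtain ⟨hpos, hlim, hle⟩ := seq_aux t0 ht0
  refine ⟨fun n => t0 * (1/2)^n, fun _ => (w, 0), hpos, hlim, tendsto_const_nhds, fun n => ?_⟩
  have hmem := (hP _ (hpos n) (hle n)).1
  show ((zb, lb) + (t0 * (1/2)^n) • ((w, 0) : E × E)).2 ∈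
    subdiff g ((zb, lb) + (t0 * (1/2)^n) • ((w, 0) : E × E)).1
  simp only [Prod.smul_mk, Prod.mk_add_mk, smul_zero, add_zero]
  exact hmem

include hepi hγ hbot hl in
lemma mem_btcone_polar {u : E} (hu : u ∈ polarCone (Kzero b β zb lb γ)) :
    ((0, u) : E × E) ∈ btcone {p : E × E | p.2 ∈ subdiff g p.1} (zb, lb) := by
  obtain ⟨t1, ht1, hP⟩ := P2 hepi hbot hγ hl hu
  obtain ⟨hpos, hlim, hle⟩ := seq_aux t1 ht1
  refine ⟨fun n => t1 * (1/2)^n, fun _ => (0, u), hpos, hlim, tendsto_const_nhds, fun n => ?_⟩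
  have hmem := hP _ (hpos n) (hle n)
  show ((zb, lb) + (t1 * (1/2)^n) • ((0, u) : E × E)).2 ∈
    subdiff g ((zb, lb) + (t1 * (1/2)^n) • ((0, u) : E × E)).1
  simp only [Prod.smul_mk, Prod.mk_add_mk, smul_zero, add_zero]
  exact hmem

include hepi hγ hbot hl in
lemma btcone_forward [FiniteDimensional ℝ E] {w₁ w₂ : E}
    (hw : ((w₁, w₂) : E × E) ∈ btcone {p : E × E | p.2 ∈ subdiff g p.1} (zb, lb)) :
    w₁ ∈ Kzero b β zb lb γ ∧ w₂ ∈ polarCone (Kzero b β zb lb γ) := by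
  obtain ⟨t, v, htpos, ht0, hv, hmem⟩ := hw
  have hmem' : ∀ n, lb + t n • (v n).2 ∈ subdiff g (zb + t n • (v n).1) := by
    intro n
    have h := hmem n
    simp only [mem_setOf_eq, Prod.snd_add, Prod.fst_add, Prod.smul_snd, Prod.smul_fst] at h
    exact h
  have hv1 : Tendsto (fun n => (v n).1) atTop (𝓝 w₁) := (continuous_fst.tendsto _).comp hv
  have hv2 : Tendsto (fun n => (v n).2) atTop (𝓝 w₂) := (continuous_snd.tendsto _).comp hv
  -- lower value bound
  have hge : ∀ n, ((γ + t n * (inner ℝ lb ((v n).1) : ℝ) : ℝ) : EReal) ≤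
      g (zb + t n • (v n).1) := fun n => lower_q hγ hl (htpos n) _
  -- upper value bound
  have hle : ∀ n, g (zb + t n • (v n).1) ≤
      ((γ + t n * ((inner ℝ lb ((v n).1) : ℝ) + t n * (inner ℝ ((v n).2) ((v n).1) : ℝ)) : ℝ) : EReal) := by
    intro n
    have h := hmem' n zb
    rw [hγ] at h
    have hc : (inner ℝ (lb + t n • (v n).2) (zb - (zb + t n • (v n).1)) : ℝ)
        = -(t n * ((inner ℝ lb ((v n).1) : ℝ) + t n * (inner ℝ ((v n).2) ((v n).1) : ℝ))) := by
      rw [show zb - (zb + t n • (v n).1) = -(t n • (v n).1) by abel, inner_neg_right,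
        inner_add_left, real_inner_smul_right, real_inner_smul_left, real_inner_smul_right]
      ring
    rw [hc] at h
    have h2 := ereal_add_le (hbot _) h
    have h3 : γ - (-(t n * ((inner ℝ lb ((v n).1) : ℝ) + t n * (inner ℝ ((v n).2) ((v n).1) : ℝ))))
        = γ + t n * ((inner ℝ lb ((v n).1) : ℝ) + t n * (inner ℝ ((v n).2) ((v n).1) : ℝ)) := by ring
    rwa [h3] at h2
  have hfin : ∀ n, g (zb + t n • (v n).1) ≠ ⊤ := fun n =>
    ne_top_of_le_ne_top (EReal.coe_ne_top _) (hle n)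
  have hρ : ∀ n, g (zb + t n • (v n).1) = (((g (zb + t n • (v n).1)).toReal : ℝ) : EReal) :=
    fun n => (EReal.coe_toReal (hfin n) (hbot _)).symm
  set ρ : ℕ → ℝ := fun n => (g (zb + t n • (v n).1)).toReal with hρdef
  have hρle : ∀ n, ρ n ≤ γ + t n * ((inner ℝ lb ((v n).1) : ℝ) + t n * (inner ℝ ((v n).2) ((v n).1) : ℝ)) := by
    intro n
    have := hle n
    rw [hρ n] at this
    exact_mod_cast this
  -- the sequence tends into the product filter
  have hseq : Tendsto (fun n => (t n, (v n).1)) atTop ((𝓝[>] (0:ℝ)) ×ˢ 𝓝 w₁) :=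
    Tendsto.prodMk (tendsto_nhdsWithin_of_tendsto_nhds_of_eventually_within _ ht0
      (Eventually.of_forall htpos)) hv1
  constructor
  · -- w₁ ∈ Kzero  : critical cone membership
    rw [← Kcone_eq hepi hbot hγ hl]
    have hlower := subderiv_ge hbot hγ hl w₁
    have hupper : subderiv g zb w₁ ≤ ((inner ℝ lb w₁ : ℝ) : EReal) := by
      by_contra hgt
      rw [not_le] at hgt
      obtain ⟨c, hc1, hc2⟩ := EReal.exists_between_coe_real hgt
      have hB : Tendsto (fun n => (inner ℝ lb ((v n).1) : ℝ) +
          t n * (inner ℝ ((v n).2) ((v n).1) : ℝ)) atTop (𝓝 ((inner ℝ lb w₁ : ℝ))) := by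
        have h := (Tendsto.inner (tendsto_const_nhds (x := lb)) hv1).add
          (ht0.mul (Tendsto.inner hv2 hv1))
        simpa using h
      have hcc : (inner ℝ lb w₁ : ℝ) < c := by exact_mod_cast hc1
      have hev : ∀ᶠ n in atTop, (g (zb + t n • (v n).1) - g zb) * (((t n)⁻¹ : ℝ) : EReal)
          ≤ ((c : ℝ) : EReal) := by
        filter_upwards [hB.eventually (gt_mem_nhds hcc)] with n hn
        rw [hγ, hρ n, ← EReal.coe_sub, ← EReal.coe_mul, EReal.coe_le_coe_iff]
        have h1 := hρle n
        have ht' := htpos n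
        have hgeρ : γ + t n * (inner ℝ lb ((v n).1) : ℝ) ≤ ρ n := by
          have := hge n
          rw [hρ n] at this
          exact_mod_cast this
        have : (ρ n - γ) * (t n)⁻¹ ≤ (inner ℝ lb ((v n).1) : ℝ) +
            t n * (inner ℝ ((v n).2) ((v n).1) : ℝ) := by
          rw [show (ρ n - γ) * (t n)⁻¹ = (ρ n - γ) / t n by ring, div_le_iff₀ ht']
          nlinarith
        linarith
      have hfreq : ∃ᶠ p : ℝ × E in (𝓝[>] (0:ℝ)) ×ˢ 𝓝 w₁,
          (g (zb + p.1 • p.2) - g zb) * (((p.1)⁻¹ : ℝ) : EReal) ≤ ((c : ℝ) : EReal) :=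
        (Filter.frequently_map.mpr hev.frequently).filter_mono hseq
      have := Filter.liminf_le_of_frequently_le' hfreq
      rw [show Filter.liminf (fun p : ℝ × E =>
        (g (zb + p.1 • p.2) - g zb) * (((p.1)⁻¹ : ℝ) : EReal))
        ((𝓝[>] (0:ℝ)) ×ˢ 𝓝 w₁) = subderiv g zb w₁ from rfl] at this
      exact absurd (lt_of_lt_of_le hc2 this) (lt_irrefl _)
    exact le_antisymm hupper hlower
  · -- w₂ ∈ polarCone Kzero
    intro w' hw'
    obtain ⟨t0, ht0', hP⟩ := P1 hepi hγ hl hw'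
    have hmemP := hP t0 ht0' (le_refl _)
    have hmono : ∀ n, 0 ≤ (inner ℝ ((v n).2) (t n • (v n).1 - t0 • w') : ℝ) := by
      intro n
      have h := subdiff_mono hbot (hmem' n) hmemP.1 (hρ n) hmemP.2
      have heq1 : lb + t n • (v n).2 - lb = t n • (v n).2 := by abel
      have heq2 : zb + t n • (v n).1 - (zb + t0 • w') = t n • (v n).1 - t0 • w' := by abel
      rw [heq1, heq2, real_inner_smul_left] at h
      exact (mul_nonneg_iff_of_pos_left (htpos n)).mp h
    have hlim2 : Tendsto (fun n => (inner ℝ ((v n).2) (t n • (v n).1 - t0 • w') : ℝ)) atTop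
        (𝓝 ((inner ℝ w₂ ((0:ℝ) • w₁ - t0 • w') : ℝ))) :=
      Tendsto.inner hv2 ((ht0.smul hv1).sub tendsto_const_nhds)
    have h0 : (0:ℝ) ≤ (inner ℝ w₂ ((0:ℝ) • w₁ - t0 • w') : ℝ) :=
      ge_of_tendsto' hlim2 hmono
    rw [zero_smul, zero_sub, inner_neg_right, real_inner_smul_right] at h0
    nlinarith

end Setup

/-- the regular (Fréchet) normal cone to `gph ∂g` at `(zb,lb)` is
`K* × K`, `K` the critical cone. The regular normal cone is the polar of the
(Bouligand) tangent cone. -/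
theorem stmt11 {m : ℕ} (g : EuclideanSpace ℝ (Fin m) → EReal) (hg : IsPolyhedralFn g)
    (zb lb : EuclideanSpace ℝ (Fin m)) (hl : lb ∈ subdiff g zb) :
    {v : EuclideanSpace ℝ (Fin m) × EuclideanSpace ℝ (Fin m) |
        ∀ w ∈ btcone {p : EuclideanSpace ℝ (Fin m) × EuclideanSpace ℝ (Fin m) |
            p.2 ∈ subdiff g p.1} (zb, lb),
          (inner ℝ v.1 w.1 : ℝ) + (inner ℝ v.2 w.2 : ℝ) ≤ 0} =
      (polarCone (Kcone g zb lb)) ×ˢ (Kcone g zb lb) := by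
  obtain ⟨⟨z₀, hz₀⟩, hbot, s, b, β, hepi⟩ := hg
  have hzbne : g zb ≠ ⊤ := by
    intro htop
    have h := hl z₀
    rw [htop, EReal.top_add_coe] at h
    exact hz₀ (top_le_iff.mp h)
  set γ : ℝ := (g zb).toReal with hγdef
  have hγ : g zb = (γ : EReal) := (EReal.coe_toReal hzbne (hbot zb)).symm
  have hKeq := Kcone_eq hepi hbot hγ hl
  rw [hKeq]
  ext v
  obtain ⟨v₁, v₂⟩ := v
  simp only [mem_setOf_eq, Set.mem_prod]
  constructor
  · intro hv
    constructor
    · intro w hwK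
      have h := hv (w, 0) (mem_btcone_K hepi hγ hl hwK)
      simpa using h
    · by_contra hnot
      rw [Kzero, mem_setOf_eq] at hnot
      push_neg at hnot
      obtain ⟨i, hact, hviol⟩ := hnot
      set u : EuclideanSpace ℝ (Fin m) :=
        (InnerProductSpace.toDual ℝ _).symm (pA b i).toContinuousLinearMap + pa b i • lb
        with hu_def
      have huapp : ∀ w' : EuclideanSpace ℝ (Fin m),
          (inner ℝ u w' : ℝ) = pA b i w' + pa b i * (inner ℝ lb w' : ℝ) := by
        intro w'
        rw [hu_def, inner_add_left, real_inner_smul_left, InnerProductSpace.toDual_symm_apply]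
        rfl
      have hu : u ∈ polarCone (Kzero b β zb lb γ) := by
        intro w' hw'
        rw [huapp]
        have := hw' i hact
        linarith [this]
      have h := hv (0, u) (mem_btcone_polar hepi hbot hγ hl hu)
      have h2 : (inner ℝ v₂ u : ℝ) ≤ 0 := by simpa using h
      rw [real_inner_comm, huapp] at h2
      linarith [hviol]
  · rintro ⟨h1, h2⟩ w hw
    obtain ⟨w₁, w₂⟩ := w
    obtain ⟨hw1, hw2⟩ := btcone_forward hepi hbot hγ hl hw
    have ha := h1 w₁ hw1
    have hb : (inner ℝ v₂ w₂ : ℝ) ≤ 0 := by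
      have := hw2 v₂ h2
      rwa [real_inner_comm] at this
    linarith

end
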